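/- Let a = (a_1, ..., a_n) ∈ ℝ^n be a unit vector, set a_0 := 0, assume a_i ≠ a_j for every pair of distinct indices i, j ∈ {0, 1, ..., n}, and let f(t) denote the n-dimensional Lebesgue volume of Θ(a,t) := Δ ∩ {x : ⟨a, x⟩ ≤ t}. Then f(t) = 0 for all t ≤ min_{0 ≤ i ≤ n} a_i, f(t) = 1/n! for all t ≥ max_{0 ≤ i ≤ n} a_i, and on each closed interval between two consecutive values among {a_0, a_1, ..., a_n} (ordered increasingly), f coincides with a polynomial function of degree at most n. -/

import Mathlib

open MeasureTheory Finset Pointwise Polynomial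

def Ssec (m : ℕ) (a : Fin m → ℝ) (t : ℝ) : Set (Fin m → ℝ) :=
  {x | ((∀ i, 0 ≤ x i) ∧ ∑ i, x i ≤ 1) ∧ ∑ i, a i * x i ≤ t}

lemma hasDerivAt_maxpow (m : ℕ) (hm : 1 ≤ m) (u : ℝ) :
    HasDerivAt (fun x : ℝ => max x 0 ^ (m + 1)) ((m + 1) * max u 0 ^ m) u := by
  rcases lt_trichotomy u 0 with hu | hu | hu
  · have h : ∀ᶠ x in nhds u, max x 0 ^ (m+1) = (0:ℝ) := by
      filter_upwards [eventually_lt_nhds hu] with x hx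
      rw [max_eq_right hx.le, zero_pow (by omega)]
    have h0 : HasDerivAt (fun _ : ℝ => (0:ℝ)) 0 u := hasDerivAt_const u 0
    have := h0.congr_of_eventuallyEq (h.mono fun x hx => hx)
    rw [max_eq_right hu.le, zero_pow (by omega), mul_zero]
    exact this
  · subst hu
    rw [max_self, zero_pow (by omega), mul_zero]
    rw [hasDerivAt_iff_tendsto_slope]
    have key : ∀ᶠ x in nhdsWithin (0:ℝ) {(0:ℝ)}ᶜ,
        ‖slope (fun x : ℝ => max x 0 ^ (m+1)) 0 x‖ ≤ |x| ^ m := by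
      filter_upwards [self_mem_nhdsWithin] with x hx
      have hx0 : (x:ℝ) ≠ 0 := hx
      rw [slope_def_field]
      simp only [max_self, zero_pow (Nat.succ_ne_zero m), sub_zero]
      have h1 : |max x 0| ≤ |x| := by
        rw [abs_of_nonneg (le_max_right x 0)]
        exact max_le (le_abs_self x) (abs_nonneg x)
      have : ‖max x 0 ^ (m+1) / x‖ = |max x 0| ^ (m+1) / |x| := by
        rw [Real.norm_eq_abs, abs_div, abs_pow]
      rw [this, div_le_iff₀ (abs_pos.mpr hx0)]
      calc |max x 0| ^ (m+1) ≤ |x| ^ (m+1) :=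
            pow_le_pow_left₀ (abs_nonneg _) h1 _
        _ = |x| ^ m * |x| := by ring
    have hg : Filter.Tendsto (fun x : ℝ => |x| ^ m) (nhdsWithin 0 {(0:ℝ)}ᶜ) (nhds 0) := by
      have : Filter.Tendsto (fun x : ℝ => |x| ^ m) (nhds 0) (nhds 0) := by
        have := ((continuous_abs.pow m).tendsto (0:ℝ))
        rwa [Pi.pow_apply, abs_zero, zero_pow (by omega : m ≠ 0)] at this
      exact this.mono_left nhdsWithin_le_nhds
    exact squeeze_zero_norm' key hg
  · have h : ∀ᶠ x in nhds u, max x 0 ^ (m+1) = x ^ (m+1) := by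
      filter_upwards [eventually_gt_nhds hu] with x hx
      rw [max_eq_left hx.le]
    have hp : HasDerivAt (fun x : ℝ => x ^ (m+1)) ((m+1) * u ^ m) u := by
      simpa using hasDerivAt_pow (m+1) u
    have := hp.congr_of_eventuallyEq (h.mono fun x hx => hx)
    rw [max_eq_left hu.le]
    exact this


lemma integral_maxpow (m : ℕ) (hm : 1 ≤ m) (α β : ℝ) (hβ : β ≠ 0) :
    ∫ s in (0:ℝ)..1, max (α - β * s) 0 ^ m
      = (max α 0 ^ (m+1) - max (α - β) 0 ^ (m+1)) / ((m+1) * β) := by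
  have hderiv : ∀ s ∈ Set.uIcc (0:ℝ) 1,
      HasDerivAt (fun s : ℝ => -(max (α - β * s) 0 ^ (m+1)) / ((m+1) * β))
        (max (α - β * s) 0 ^ m) s := by
    intro s _
    have hin : HasDerivAt (fun s : ℝ => α - β * s) (-β) s := by
      simpa using ((hasDerivAt_id s).const_mul β).const_sub α
    have hcomp := (hasDerivAt_maxpow m hm (α - β * s)).comp s hin
    have := (hcomp.neg).div_const ((m+1) * β)
    refine this.congr_deriv ?_
    have hm1 : ((m:ℝ) + 1) ≠ 0 := by positivity
    field_simp
  have hcont : IntervalIntegrable (fun s : ℝ => max (α - β * s) 0 ^ m) volume 0 1 := by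
    apply Continuous.intervalIntegrable
    exact ((continuous_const.sub (continuous_const.mul continuous_id)).max continuous_const).pow m
  rw [intervalIntegral.integral_eq_sub_of_hasDerivAt hderiv hcont]
  have hm1 : ((m:ℝ) + 1) * β ≠ 0 := by
    have : ((m:ℝ) + 1) ≠ 0 := by positivity
    exact mul_ne_zero this hβ
  field_simp
  ring_nf


lemma basis_coeff_top {k : ℕ} (v : Fin k → ℝ) (i : Fin k) :
    (Lagrange.basis univ v i).coeff (k - 1) = ∏ j ∈ univ.erase i, (v i - v j)⁻¹ := by
  unfold Lagrange.basis Lagrange.basisDivisor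
  rw [Finset.prod_mul_distrib]
  have hP : (∏ j ∈ univ.erase i, (X - C (v j)) : ℝ[X]).Monic :=
    monic_prod_of_monic _ _ fun j _ => monic_X_sub_C _
  have hdeg : (∏ j ∈ univ.erase i, (X - C (v j)) : ℝ[X]).natDegree = k - 1 := by
    rw [natDegree_prod_of_monic _ _ fun j _ => monic_X_sub_C _]
    simp [card_erase_of_mem (mem_univ i)]
  rw [← map_prod]
  rw [coeff_C_mul, ← hdeg, hP.coeff_natDegree, mul_one]

lemma lagrange_coeff_extract {k : ℕ} (v : Fin k → ℝ) (hv : Function.Injective v)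
    (f : Polynomial ℝ) (hdeg : f.degree < k) :
    f.coeff (k - 1) = ∑ i : Fin k, f.eval (v i) * (∏ j ∈ univ.erase i, (v i - v j))⁻¹ := by
  have h := Lagrange.eq_interpolate (s := univ) (v := v) (hv.injOn) (by simpa using hdeg)
  conv_lhs => rw [h]
  rw [Lagrange.interpolate_apply, finset_sum_coeff]
  refine Finset.sum_congr rfl fun i _ => ?_
  rw [coeff_C_mul, basis_coeff_top, ← Finset.prod_inv_distrib]

lemma neg_one_pow_sq (d : ℕ) : ((-1:ℝ)^d) * ((-1:ℝ)^d) = 1 := by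
  rw [← pow_add, ← two_mul, pow_mul]; norm_num

lemma prod_sub_sign {k : ℕ} (v : Fin k → ℝ) (i : Fin k) :
    (∏ j ∈ univ.erase i, (v j - v i))⁻¹
      = (-1:ℝ)^(k-1) * (∏ j ∈ univ.erase i, (v i - v j))⁻¹ := by
  have h : ∏ j ∈ univ.erase i, (v j - v i)
      = (-1:ℝ)^(k-1) * ∏ j ∈ univ.erase i, (v i - v j) := by
    have h1 : ∀ j ∈ univ.erase i, v j - v i = (-1) * (v i - v j) := fun j _ => by ring
    rw [Finset.prod_congr rfl h1, Finset.prod_mul_distrib, Finset.prod_const,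
      card_erase_of_mem (mem_univ i)]
    simp
  rw [h, mul_inv, ← inv_pow, inv_neg, inv_one]

lemma lag_sum_inv_zero {k : ℕ} (hk : 2 ≤ k) (v : Fin k → ℝ) (hv : Function.Injective v) :
    ∑ i : Fin k, (∏ j ∈ univ.erase i, (v j - v i))⁻¹ = 0 := by
  have h := lagrange_coeff_extract v hv 1 (by
    rw [degree_one]; exact_mod_cast Nat.cast_pos.mpr (by omega))
  simp only [eval_one, one_mul] at h
  have h1 : (1 : ℝ[X]).coeff (k-1) = 0 := by
    rw [coeff_one]; simp; omega
  rw [h1] at h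
  calc ∑ i : Fin k, (∏ j ∈ univ.erase i, (v j - v i))⁻¹
      = (-1:ℝ)^(k-1) * ∑ i : Fin k, (∏ j ∈ univ.erase i, (v i - v j))⁻¹ := by
        rw [Finset.mul_sum]
        exact Finset.sum_congr rfl fun i _ => prod_sub_sign v i
    _ = 0 := by rw [← h, mul_zero]

lemma lag_sum_one {k : ℕ} (hk : 1 ≤ k) (v : Fin k → ℝ) (hv : Function.Injective v) (t : ℝ) :
    ∑ i : Fin k, (t - v i)^(k-1) * (∏ j ∈ univ.erase i, (v j - v i))⁻¹ = 1 := by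
  set f : ℝ[X] := C ((-1:ℝ)^(k-1)) * (X - C t)^(k-1) with hf
  have hmonic : (((X : ℝ[X]) - C t)^(k-1)).Monic := (monic_X_sub_C t).pow (k-1)
  have hnd : (((X : ℝ[X]) - C t)^(k-1)).natDegree = k - 1 := by
    rw [natDegree_pow, natDegree_X_sub_C, mul_one]
  have hdeg : f.degree < k := by
    have h1 : f.natDegree ≤ k - 1 := by
      calc (C ((-1:ℝ)^(k-1)) * (X - C t)^(k-1)).natDegree
          ≤ (C ((-1:ℝ)^(k-1))).natDegree + ((X - C t : ℝ[X])^(k-1)).natDegree :=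
            natDegree_mul_le
        _ = k - 1 := by rw [natDegree_C, hnd, zero_add]
    calc f.degree ≤ f.natDegree := degree_le_natDegree
      _ < (k : WithBot ℕ) := by exact_mod_cast Nat.lt_of_le_of_lt h1 (by omega : k - 1 < k)
  have hcoeff : f.coeff (k-1) = (-1:ℝ)^(k-1) := by
    have h2 := hmonic.coeff_natDegree
    rw [hnd] at h2
    rw [hf, coeff_C_mul, h2, mul_one]
  have heval : ∀ i, f.eval (v i) = (-1:ℝ)^(k-1) * (v i - t)^(k-1) := by
    intro i; rw [hf]; simp
  have h := lagrange_coeff_extract v hv f hdeg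
  rw [hcoeff] at h
  have h2 : ∑ i : Fin k, (v i - t)^(k-1) * (∏ j ∈ univ.erase i, (v i - v j))⁻¹ = 1 := by
    have h3 : (-1:ℝ)^(k-1) * 1 = (-1:ℝ)^(k-1) *
        ∑ i : Fin k, (v i - t)^(k-1) * (∏ j ∈ univ.erase i, (v i - v j))⁻¹ := by
      rw [mul_one]
      conv_lhs => rw [h]
      rw [Finset.mul_sum]
      exact Finset.sum_congr rfl fun i _ => by rw [heval]; ring
    have hne : ((-1:ℝ)^(k-1)) ≠ 0 := pow_ne_zero _ (by norm_num)
    exact (mul_left_cancel₀ hne h3).symm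
  calc ∑ i : Fin k, (t - v i)^(k-1) * (∏ j ∈ univ.erase i, (v j - v i))⁻¹
      = ∑ i : Fin k, (v i - t)^(k-1) * (∏ j ∈ univ.erase i, (v i - v j))⁻¹ := by
        refine Finset.sum_congr rfl fun i _ => ?_
        rw [prod_sub_sign, show t - v i = (-1) * (v i - t) by ring, mul_pow]
        rw [show ((-1:ℝ))^(k-1) * (v i - t)^(k-1) * ((-1:ℝ)^(k-1) * (∏ j ∈ univ.erase i, (v i - v j))⁻¹)
            = ((-1:ℝ)^(k-1) * (-1:ℝ)^(k-1)) * ((v i - t)^(k-1) * (∏ j ∈ univ.erase i, (v i - v j))⁻¹) by ring,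
          neg_one_pow_sq, one_mul]
    _ = 1 := h2


lemma base_pos (c t : ℝ) (hc : 0 < c) :
    max (min 1 (t/c)) 0 = max t 0 / c - max (t - c) 0 / c := by
  rcases le_total t 0 with h0 | h0
  · have hd : t / c ≤ 0 := div_nonpos_iff.mpr (Or.inr ⟨h0, hc.le⟩)
    rw [min_eq_right (le_trans hd zero_le_one), max_eq_right hd,
      max_eq_right h0, max_eq_right (by linarith : t - c ≤ 0)]
    simp
  · rcases le_total t c with h1 | h1
    · have hd0 : 0 ≤ t / c := div_nonneg h0 hc.le
      have hd1 : t / c ≤ 1 := (div_le_one hc).mpr h1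
      rw [min_eq_right hd1, max_eq_left hd0, max_eq_left h0,
        max_eq_right (by linarith : t - c ≤ 0)]
      simp
    · have hd1 : 1 ≤ t / c := (one_le_div hc).mpr h1
      rw [min_eq_left hd1, max_eq_left zero_le_one, max_eq_left (by linarith : 0 ≤ t),
        max_eq_left (by linarith : 0 ≤ t - c)]
      rw [sub_div, div_self hc.ne']
      ring

lemma base_neg (c t : ℝ) (hc : c < 0) :
    max (1 - max 0 (t/c)) 0 = max t 0 / c - max (t - c) 0 / c := by
  rcases le_total 0 t with h0 | h0
  · have hd : t / c ≤ 0 := div_nonpos_iff.mpr (Or.inl ⟨h0, hc.le⟩)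
    rw [max_eq_left hd, sub_zero, max_eq_left zero_le_one, max_eq_left h0,
      max_eq_left (by linarith : 0 ≤ t - c)]
    rw [div_sub_div_same]
    rw [sub_sub_cancel, div_self hc.ne]
  · rcases le_total c t with h1 | h1
    · have hd0 : 0 ≤ t / c := div_nonneg_of_nonpos h0 hc.le
      have hd1 : t / c ≤ 1 := by
        rw [div_le_iff_of_neg hc]; linarith
      rw [max_eq_right hd0, max_eq_left (by linarith : 0 ≤ 1 - t/c), max_eq_right h0,
        max_eq_left (by linarith : 0 ≤ t - c)]
      rw [sub_div, div_self hc.ne]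
      ring
    · have hd1 : 1 ≤ t / c := by
        rw [le_div_iff_of_neg hc]; linarith
      rw [max_eq_right (div_nonneg_of_nonpos h0 hc.le), max_eq_right (by linarith : 1 - t/c ≤ 0),
        max_eq_right h0, max_eq_right (by linarith : t - c ≤ 0)]
      simp


/-- The section set. -/

lemma isClosed_Ssec (m : ℕ) (a : Fin m → ℝ) (t : ℝ) : IsClosed (Ssec m a t) := by
  have h1 : IsClosed {x : Fin m → ℝ | ∀ i, 0 ≤ x i} := by
    have : {x : Fin m → ℝ | ∀ i, 0 ≤ x i} = ⋂ i, {x | 0 ≤ x i} := by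
      ext x; simp
    rw [this]
    exact isClosed_iInter fun i => isClosed_le continuous_const (continuous_apply i)
  have h2 : IsClosed {x : Fin m → ℝ | ∑ i, x i ≤ 1} :=
    isClosed_le (by continuity) continuous_const
  have h3 : IsClosed {x : Fin m → ℝ | ∑ i, a i * x i ≤ t} :=
    isClosed_le (by continuity) continuous_const
  exact ((h1.inter h2).inter h3)

lemma measurableSet_Ssec (m : ℕ) (a : Fin m → ℝ) (t : ℝ) : MeasurableSet (Ssec m a t) :=
  (isClosed_Ssec m a t).measurableSet

lemma volume_Ssec_le_one (m : ℕ) (a : Fin m → ℝ) (t : ℝ) : volume (Ssec m a t) ≤ 1 := by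
  have hsub : Ssec m a t ⊆ Set.pi Set.univ (fun _ : Fin m => Set.Icc (0:ℝ) 1) := by
    intro x hx
    intro i _
    refine ⟨hx.1.1 i, ?_⟩
    calc x i ≤ ∑ j, x j := Finset.single_le_sum (fun j _ => hx.1.1 j) (mem_univ i)
      _ ≤ 1 := hx.1.2
  calc volume (Ssec m a t) ≤ volume (Set.pi Set.univ (fun _ : Fin m => Set.Icc (0:ℝ) 1)) :=
        measure_mono hsub
    _ = 1 := by
        rw [volume_pi_pi]
        simp [Real.volume_Icc]

lemma volume_Ssec_ne_top (m : ℕ) (a : Fin m → ℝ) (t : ℝ) : volume (Ssec m a t) ≠ ⊤ :=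
  ne_top_of_le_ne_top ENNReal.one_ne_top (volume_Ssec_le_one m a t)

lemma volume_Ssec_scale (m : ℕ) (a : Fin m → ℝ) (c τ : ℝ) (hc : 0 < c) :
    volume {x : Fin m → ℝ | ((∀ i, 0 ≤ x i) ∧ ∑ i, x i ≤ c) ∧ ∑ i, a i * x i ≤ τ}
      = ENNReal.ofReal (c ^ m) * volume (Ssec m a (τ / c)) := by
  have hset : {x : Fin m → ℝ | ((∀ i, 0 ≤ x i) ∧ ∑ i, x i ≤ c) ∧ ∑ i, a i * x i ≤ τ}
      = c • Ssec m a (τ / c) := by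
    ext x
    rw [Set.mem_smul_set_iff_inv_smul_mem₀ hc.ne']
    simp only [Ssec, Set.mem_setOf_eq, Pi.smul_apply, smul_eq_mul]
    have hci : (0:ℝ) < c⁻¹ := inv_pos.mpr hc
    constructor
    · rintro ⟨⟨hpos, hsum⟩, hlin⟩
      refine ⟨⟨fun i => mul_nonneg hci.le (hpos i), ?_⟩, ?_⟩
      · rw [← Finset.mul_sum]
        rw [inv_mul_le_iff₀ hc, mul_one]  -- c⁻¹ * Σ ≤ 1 ↔ Σ ≤ c
        exact hsum
      · have : ∑ i, a i * (c⁻¹ * x i) = c⁻¹ * ∑ i, a i * x i := by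
          rw [Finset.mul_sum]; exact Finset.sum_congr rfl fun i _ => by ring
        rw [this, div_eq_inv_mul]
        exact mul_le_mul_of_nonneg_left hlin hci.le
    · rintro ⟨⟨hpos, hsum⟩, hlin⟩
      have hpos' : ∀ i, 0 ≤ x i := fun i => by
        have := hpos i; nlinarith [hpos i]
      refine ⟨⟨hpos', ?_⟩, ?_⟩
      · rw [← Finset.mul_sum, inv_mul_le_iff₀ hc, mul_one] at hsum
        exact hsum
      · have h2 : ∑ i, a i * (c⁻¹ * x i) = c⁻¹ * ∑ i, a i * x i := by
          rw [Finset.mul_sum]; exact Finset.sum_congr rfl fun i _ => by ring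
        rw [h2, div_eq_inv_mul] at hlin
        exact le_of_mul_le_mul_left (by linarith [hlin]) hci
  rw [hset, Measure.addHaar_smul_of_nonneg volume hc.le, Module.finrank_fin_fun]



lemma volume_Ssec_succ (m : ℕ) (a : Fin (m+1) → ℝ) (t : ℝ) :
    volume (Ssec (m+1) a t)
      = ∫⁻ s : ℝ, volume {y : Fin m → ℝ |
          ((0 ≤ s ∧ ∀ i, 0 ≤ y i) ∧ s + ∑ i, y i ≤ 1) ∧ a 0 * s + ∑ i, Fin.tail a i * y i ≤ t} := by
  set T : Set (ℝ × (Fin m → ℝ)) := {p | ((0 ≤ p.1 ∧ ∀ i, 0 ≤ p.2 i) ∧ p.1 + ∑ i, p.2 i ≤ 1)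
      ∧ a 0 * p.1 + ∑ i, Fin.tail a i * p.2 i ≤ t} with hT
  have hTclosed : IsClosed T := by
    have c1 : IsClosed {p : ℝ × (Fin m → ℝ) | 0 ≤ p.1} :=
      isClosed_le continuous_const continuous_fst
    have c2 : IsClosed {p : ℝ × (Fin m → ℝ) | ∀ i, 0 ≤ p.2 i} := by
      have : {p : ℝ × (Fin m → ℝ) | ∀ i, 0 ≤ p.2 i} = ⋂ i, {p | 0 ≤ p.2 i} := by ext p; simp
      rw [this]
      exact isClosed_iInter fun i =>
        isClosed_le continuous_const ((continuous_apply i).comp continuous_snd)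
    have c3 : IsClosed {p : ℝ × (Fin m → ℝ) | p.1 + ∑ i, p.2 i ≤ 1} := by
      apply isClosed_le _ continuous_const
      exact continuous_fst.add (continuous_finset_sum _ fun i _ =>
        (continuous_apply i).comp continuous_snd)
    have c4 : IsClosed {p : ℝ × (Fin m → ℝ) | a 0 * p.1 + ∑ i, Fin.tail a i * p.2 i ≤ t} := by
      apply isClosed_le _ continuous_const
      exact (continuous_const.mul continuous_fst).add (continuous_finset_sum _ fun i _ =>
        continuous_const.mul ((continuous_apply i).comp continuous_snd))
    exact (c1.inter c2).inter c3 |>.inter c4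
  have hTmeas : MeasurableSet T := hTclosed.measurableSet
  have hpre : (MeasurableEquiv.piFinSuccAbove (fun _ : Fin (m+1) => ℝ) 0) ⁻¹' T
      = Ssec (m+1) a t := by
    ext x
    simp only [Set.mem_preimage, MeasurableEquiv.piFinSuccAbove, MeasurableEquiv.coe_mk,
      MeasurableEquiv.piFinSuccAbove_apply, Fin.insertNthEquiv_symm_apply, Equiv.coe_fn_mk, hT, Set.mem_setOf_eq, Fin.removeNth,
      Fin.succAbove_zero, Ssec]
    constructor
    · rintro ⟨⟨⟨h0, hpos⟩, hsum⟩, hlin⟩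
      refine ⟨⟨?_, ?_⟩, ?_⟩
      · intro i
        refine Fin.cases h0 (fun j => hpos j) i
      · rw [Fin.sum_univ_succ]; exact hsum
      · rw [Fin.sum_univ_succ]
        simpa [Fin.tail] using hlin
    · rintro ⟨⟨hpos, hsum⟩, hlin⟩
      rw [Fin.sum_univ_succ] at hsum
      rw [Fin.sum_univ_succ] at hlin
      exact ⟨⟨⟨hpos 0, fun j => hpos j.succ⟩, hsum⟩, by simpa [Fin.tail] using hlin⟩
  have hmp := (measurePreserving_piFinSuccAbove (fun _ : Fin (m+1) => (volume : Measure ℝ)) 0)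
  have key : (Measure.pi fun _ : Fin (m+1) => (volume : Measure ℝ)) (Ssec (m+1) a t)
      = ((volume : Measure ℝ).prod (Measure.pi fun _ : Fin m => (volume : Measure ℝ))) T := by
    rw [← hpre]
    exact hmp.measure_preimage hTmeas.nullMeasurableSet
  rw [volume_pi, key, Measure.prod_apply hTmeas]
  congr 1



lemma master_base (a : Fin 1 → ℝ) (A : Fin 2 → ℝ) (hA : A = Fin.cons 0 a) (ha : a 0 ≠ 0) (t : ℝ) :
    (volume (Ssec 1 a t)).toReal
      = ∑ i : Fin 2, max (t - A i) 0 ^ 1 /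
          ((Nat.factorial 1 : ℝ) * ∏ j ∈ univ.erase i, (A j - A i)) := by
  have hA0 : A 0 = 0 := by rw [hA]; rfl
  have hA1 : A 1 = a 0 := by rw [hA]; rfl
  have hRHS : ∑ i : Fin 2, max (t - A i) 0 ^ 1 /
      ((Nat.factorial 1 : ℝ) * ∏ j ∈ univ.erase i, (A j - A i))
      = max t 0 / a 0 - max (t - a 0) 0 / a 0 := by
    rw [Fin.sum_univ_two]
    have h0 : (univ.erase (0 : Fin 2)) = {1} := by decide
    have h1 : (univ.erase (1 : Fin 2)) = {0} := by decide
    rw [h0, h1, Finset.prod_singleton, Finset.prod_singleton, hA0, hA1]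
    simp [Nat.factorial]
    ring
  rw [hRHS]
  have hclosed : MeasurableSet (Ssec 1 a t) := measurableSet_Ssec 1 a t
  have key : volume (Ssec 1 a t)
      = volume ((MeasurableEquiv.funUnique (Fin 1) ℝ).symm ⁻¹' (Ssec 1 a t)) :=
    (((volume_preserving_funUnique (Fin 1) ℝ).symm
        (MeasurableEquiv.funUnique (Fin 1) ℝ)).measure_preimage
      hclosed.nullMeasurableSet).symm
  have hset : (MeasurableEquiv.funUnique (Fin 1) ℝ).symm ⁻¹' (Ssec 1 a t)
      = {u : ℝ | (0 ≤ u ∧ u ≤ 1) ∧ a 0 * u ≤ t} := by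
    ext u
    simp only [Set.mem_preimage, Ssec, Set.mem_setOf_eq, MeasurableEquiv.funUnique,
      Equiv.funUnique, MeasurableEquiv.coe_mk, Equiv.coe_fn_symm_mk]
    constructor
    · rintro ⟨⟨hpos, hsum⟩, hlin⟩
      rw [Fin.sum_univ_one] at hsum hlin
      exact ⟨⟨hpos 0, hsum⟩, hlin⟩
    · rintro ⟨⟨h0, h1⟩, hlin⟩
      refine ⟨⟨fun i => by simpa using h0, ?_⟩, ?_⟩ <;> rw [Fin.sum_univ_one] <;> simpa
  rw [key, hset]
  rcases lt_or_gt_of_ne ha with hneg | hpos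
  · have hset2 : {u : ℝ | (0 ≤ u ∧ u ≤ 1) ∧ a 0 * u ≤ t} = Set.Icc (max 0 (t / a 0)) 1 := by
      ext u
      simp only [Set.mem_setOf_eq, Set.mem_Icc, max_le_iff]
      constructor
      · rintro ⟨⟨h0, h1⟩, hlin⟩
        exact ⟨⟨h0, by rwa [div_le_iff_of_neg hneg, mul_comm]⟩, h1⟩
      · rintro ⟨⟨h0, hd⟩, h1⟩
        rw [div_le_iff_of_neg hneg, mul_comm] at hd
        exact ⟨⟨h0, h1⟩, hd⟩
    rw [hset2, Real.volume_Icc, ENNReal.toReal_ofReal', ← base_neg (a 0) t hneg]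
  · have hset2 : {u : ℝ | (0 ≤ u ∧ u ≤ 1) ∧ a 0 * u ≤ t} = Set.Icc 0 (min 1 (t / a 0)) := by
      ext u
      simp only [Set.mem_setOf_eq, Set.mem_Icc, le_min_iff]
      constructor
      · rintro ⟨⟨h0, h1⟩, hlin⟩
        exact ⟨h0, h1, by rwa [le_div_iff₀ hpos, mul_comm]⟩
      · rintro ⟨h0, h1, hd⟩
        rw [le_div_iff₀ hpos, mul_comm] at hd
        exact ⟨⟨h0, h1⟩, hd⟩
    rw [hset2, Real.volume_Icc, ENNReal.toReal_ofReal', sub_zero, ← base_pos (a 0) t hpos]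



lemma master_step (m : ℕ) (hm : 1 ≤ m) (a : Fin (m+1) → ℝ)
    (A : Fin (m+2) → ℝ) (hA : A = Fin.cons 0 a)
    (hdist : ∀ i j : Fin (m+2), i ≠ j → A i ≠ A j)
    (IH : ∀ (a' : Fin m → ℝ) (A' : Fin (m+1) → ℝ), A' = Fin.cons 0 a' →
      (∀ i j : Fin (m+1), i ≠ j → A' i ≠ A' j) → ∀ τ : ℝ,
      (volume (Ssec m a' τ)).toReal
        = ∑ i : Fin (m+1), max (τ - A' i) 0 ^ m /
            ((Nat.factorial m : ℝ) * ∏ j ∈ univ.erase i, (A' j - A' i)))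
    (t : ℝ) :
    (volume (Ssec (m+1) a t)).toReal
      = ∑ i : Fin (m+2), max (t - A i) 0 ^ (m+1) /
          ((Nat.factorial (m+1) : ℝ) * ∏ j ∈ univ.erase i, (A j - A i)) := by
  classical
  set a' : Fin m → ℝ := Fin.tail a with ha'
  set A' : Fin (m+1) → ℝ := Fin.cons 0 a' with hA'
  set e₁ : Fin (m+1) → Fin (m+2) := (Fin.succAbove (1 : Fin (m+2))) with he₁
  have h1lt : (0 : Fin (m+2)) < 1 := by
    rw [Fin.lt_def]; simp [Fin.val_one]
  have he10 : e₁ 0 = 0 := by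
    rw [he₁, Fin.succAbove_of_castSucc_lt]
    · simp
    · simpa using h1lt
  have he1succ : ∀ j : Fin m, e₁ j.succ = (j.succ).succ := by
    intro j
    rw [he₁, Fin.succAbove_of_le_castSucc]
    rw [Fin.le_def]
    simp [Fin.val_one]
  have hA'e : ∀ i : Fin (m+1), A' i = A (e₁ i) := by
    intro i
    refine Fin.cases ?_ (fun j => ?_) i
    · rw [he10, hA, hA']; simp
    · rw [he1succ j, hA, hA']
      simp [Fin.cons_succ, ha', Fin.tail]
  have hA1 : A 1 = a 0 := by
    rw [hA, ← Fin.succ_zero_eq_one, Fin.cons_succ]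
  have hAinj : Function.Injective A := fun i j hij => by
    by_contra hne
    exact hdist i j hne hij
  have he₁inj : Function.Injective e₁ := Fin.succAbove_right_injective
  have he₁ne : ∀ i, e₁ i ≠ 1 := fun i => Fin.succAbove_ne 1 i
  have hA'dist : ∀ i j : Fin (m+1), i ≠ j → A' i ≠ A' j := by
    intro i j hne
    rw [hA'e, hA'e]
    exact hdist _ _ (fun h => hne (he₁inj h))
  set Q : Fin (m+2) → ℝ := fun k => ∏ j ∈ univ.erase k, (A j - A k) with hQ
  set P : Fin (m+1) → ℝ := fun i => ∏ j ∈ univ.erase i, (A' j - A' i) with hP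
  set β : Fin (m+1) → ℝ := fun i => a 0 - A' i with hβdef
  have hβ : ∀ i, β i ≠ 0 := by
    intro i
    rw [hβdef]
    simp only
    rw [hA'e, ← hA1, sub_ne_zero]
    exact hdist 1 (e₁ i) (fun h => he₁ne i h.symm)
  have hPne : ∀ i, P i ≠ 0 := by
    intro i
    rw [hP]
    exact Finset.prod_ne_zero_iff.mpr fun j hj =>
      sub_ne_zero.mpr (hA'dist j i (Finset.ne_of_mem_erase hj))
  have hQne : ∀ k, Q k ≠ 0 := by
    intro k
    rw [hQ]
    exact Finset.prod_ne_zero_iff.mpr fun j hj =>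
      sub_ne_zero.mpr (hdist j k (Finset.ne_of_mem_erase hj))
  have hQprod : ∀ i, Q (e₁ i) = β i * P i := by
    intro i
    have hset : univ.erase (e₁ i) = insert 1 ((univ.erase i).image e₁) := by
      have h1 : (univ : Finset (Fin (m+2))) = insert 1 (univ.image e₁) := by
        rw [he₁, Fin.image_succAbove_univ]
        simp [Finset.insert_compl_self]  -- insert 1 {1}ᶜ = univ
      rw [h1, Finset.erase_insert_of_ne (he₁ne i).symm]  -- careful direction
      congr 1
      rw [← Finset.image_erase he₁inj]
    rw [hQ]
    simp only
    rw [hset, Finset.prod_insert (by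
      intro hmem
      rcases Finset.mem_image.mp hmem with ⟨j, _, hj⟩
      exact he₁ne j hj), Finset.prod_image (fun x _ y _ h => he₁inj h)]
    rw [hA1]
    congr 1
    · rw [hβdef]; simp only; rw [hA'e]
    · rw [hP]
      exact Finset.prod_congr rfl fun j _ => by rw [hA'e, hA'e]
  -- the integrand polynomial
  set g : ℝ → ℝ := fun s => ∑ i : Fin (m+1),
      max (t - A' i - β i * s) 0 ^ m / ((Nat.factorial m : ℝ) * P i) with hg
  have hterm : ∀ s : ℝ, 0 ≤ s → s < 1 →
      (1-s)^m * (volume (Ssec m a' ((t - a 0 * s)/(1-s)))).toReal = g s := by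
    intro s hs0 hs1
    have hc : (0:ℝ) < 1 - s := by linarith
    rw [IH a' A' rfl hA'dist ((t - a 0 * s)/(1-s)), Finset.mul_sum, hg]
    refine Finset.sum_congr rfl fun i _ => ?_
    have hP' : P i = ∏ j ∈ univ.erase i, (A' j - A' i) := rfl
    have key : (1-s)^m * (max ((t - a 0 * s) / (1 - s) - A' i) 0 ^ m)
        = max (t - A' i - β i * s) 0 ^ m := by
      rw [← mul_pow]
      congr 1
      rw [mul_max_of_nonneg _ _ hc.le, mul_zero, mul_sub,
        mul_div_cancel₀ _ hc.ne']
      congr 1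
      rw [hβdef]
      ring
    rw [← hP', ← key]
    ring
  have hgpos : ∀ s ∈ Set.Ico (0:ℝ) 1, 0 ≤ g s := by
    rintro s ⟨hs0, hs1⟩
    rw [← hterm s hs0 hs1]
    exact mul_nonneg (pow_nonneg (by linarith) m) ENNReal.toReal_nonneg
  have hinner : ∀ s : ℝ,
      volume {y : Fin m → ℝ | ((0 ≤ s ∧ ∀ i, 0 ≤ y i) ∧ s + ∑ i, y i ≤ 1)
          ∧ a 0 * s + ∑ i, Fin.tail a i * y i ≤ t}
        = Set.indicator (Set.Ico (0:ℝ) 1) (fun s => ENNReal.ofReal (g s)) s := by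
    intro s
    by_cases hs : s ∈ Set.Ico (0:ℝ) 1
    · obtain ⟨hs0, hs1⟩ := hs
      have hc : (0:ℝ) < 1 - s := by linarith
      have hseteq : {y : Fin m → ℝ | ((0 ≤ s ∧ ∀ i, 0 ≤ y i) ∧ s + ∑ i, y i ≤ 1)
          ∧ a 0 * s + ∑ i, Fin.tail a i * y i ≤ t}
          = {y : Fin m → ℝ | ((∀ i, 0 ≤ y i) ∧ ∑ i, y i ≤ 1 - s)
              ∧ ∑ i, a' i * y i ≤ t - a 0 * s} := by
        ext y
        simp only [Set.mem_setOf_eq, ← ha']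
        constructor
        · rintro ⟨⟨⟨_, hpos⟩, hsum⟩, hlin⟩
          exact ⟨⟨hpos, by linarith⟩, by linarith⟩
        · rintro ⟨⟨hpos, hsum⟩, hlin⟩
          exact ⟨⟨⟨hs0, hpos⟩, by linarith⟩, by linarith⟩
      rw [hseteq, volume_Ssec_scale m a' (1-s) (t - a 0 * s) hc,
        Set.indicator_of_mem (Set.mem_Ico.mpr ⟨hs0, hs1⟩)]
      rw [← ENNReal.ofReal_toReal (volume_Ssec_ne_top m a' ((t - a 0 * s)/(1-s))),
        ← ENNReal.ofReal_mul (pow_nonneg hc.le m)]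
      rw [hterm s hs0 hs1]
    · rw [Set.indicator_of_notMem hs]
      rcases not_and_or.mp hs with hs0 | hs1
      · push_neg at hs0
        convert measure_empty (μ := (volume : Measure (Fin m → ℝ)))
        ext y
        simp only [Set.mem_setOf_eq, Set.mem_empty_iff_false, iff_false]
        rintro ⟨⟨⟨h, _⟩, _⟩, _⟩
        exact absurd h (not_le.mpr hs0)
      · push_neg at hs1
        have hzero : NullSingletonClass (volume : Measure (Fin m → ℝ)) :=
          Measure.pi_noAtoms ⟨0, hm⟩
        refine measure_mono_null ?_ (measure_singleton (fun _ => (0:ℝ)))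
        intro y hymem
        simp only [Set.mem_setOf_eq] at hymem
        obtain ⟨⟨⟨_, hpos⟩, hsum⟩, _⟩ := hymem
        have hy : ∀ i, y i = 0 := by
          intro i
          have h1 : y i ≤ ∑ j, y j :=
            Finset.single_le_sum (fun j _ => hpos j) (mem_univ i)
          have h2 : ∑ j, y j ≤ 1 - s := by linarith
          have := hpos i
          have : y i ≤ 0 := by linarith
          linarith [hpos i]
        simp only [Set.mem_singleton_iff]
        funext i
        exact hy i
  rw [volume_Ssec_succ m a t, lintegral_congr hinner,
    lintegral_indicator measurableSet_Ico]
  have hgcont : Continuous g := by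
    rw [hg]
    refine continuous_finset_sum _ fun i _ => ?_
    exact (((continuous_const.sub (continuous_const.mul continuous_id')).max
      continuous_const).pow m).div_const _
  have hgint : IntegrableOn g (Set.Ico (0:ℝ) 1) volume :=
    (hgcont.integrableOn_Icc (a := 0) (b := 1)).mono_set Set.Ico_subset_Icc_self
  rw [← ofReal_integral_eq_lintegral_ofReal hgint
    ((ae_restrict_iff' measurableSet_Ico).mpr (Filter.Eventually.of_forall ?_))]
  swap
  · intro s
    intro hs
    exact hgpos s hs
  rw [ENNReal.toReal_ofReal (setIntegral_nonneg measurableSet_Ico hgpos)]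
  -- now : ∫ s in Ico 0 1, g s = target sum
  have hIco : ∫ s in Set.Ico (0:ℝ) 1, g s = ∫ s in (0:ℝ)..1, g s := by
    rw [MeasureTheory.integral_Ico_eq_integral_Ioo,
      intervalIntegral.integral_of_le zero_le_one,
      MeasureTheory.integral_Ioc_eq_integral_Ioo]
  rw [hIco, hg]
  rw [intervalIntegral.integral_finset_sum (fun i _ => Continuous.intervalIntegrable
    (u := fun s => max (t - A' i - β i * s) 0 ^ m / ((Nat.factorial m : ℝ) * P i))
    ((((continuous_const.sub (continuous_const.mul continuous_id')).max
      continuous_const).pow m).div_const _) 0 1)]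
  have hint : ∀ i : Fin (m+1),
      (∫ s in (0:ℝ)..1, max (t - A' i - β i * s) 0 ^ m / ((Nat.factorial m : ℝ) * P i))
        = ((max (t - A' i) 0 ^ (m+1) - max (t - a 0) 0 ^ (m+1)) / ((m+1) * β i))
            / ((Nat.factorial m : ℝ) * P i) := by
    intro i
    rw [intervalIntegral.integral_div, integral_maxpow m hm (t - A' i) (β i) (hβ i)]
    congr 3
    rw [hβdef]
    ring
  rw [Finset.sum_congr rfl fun i _ => hint i]
  -- final algebra
  have hlag := lag_sum_inv_zero (k := m+2) (by omega) A hAinj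
  rw [Fin.sum_univ_succAbove
    (fun k => (∏ j ∈ univ.erase k, (A j - A k))⁻¹) 1] at hlag
  have hsumQ : ∑ i : Fin (m+1), (Q (e₁ i))⁻¹ = -(Q 1)⁻¹ := by
    rw [hQ]
    simp only
    rw [he₁]
    linarith [hlag]
  rw [Fin.sum_univ_succAbove
    (fun k => max (t - A k) 0 ^ (m+1) / ((Nat.factorial (m+1) : ℝ) * ∏ j ∈ univ.erase k, (A j - A k))) 1]
  have hfact : ((Nat.factorial (m+1) : ℝ)) = ((m:ℝ)+1) * (Nat.factorial m : ℝ) := by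
    rw [Nat.factorial_succ]
    push_cast
    ring
  have hterm2 : ∀ i : Fin (m+1),
      ((max (t - A' i) 0 ^ (m+1) - max (t - a 0) 0 ^ (m+1)) / ((m+1) * β i))
          / ((Nat.factorial m : ℝ) * P i)
        = max (t - A (e₁ i)) 0 ^ (m+1)
            / ((Nat.factorial (m+1) : ℝ) * ∏ j ∈ univ.erase (e₁ i), (A j - A (e₁ i)))
          - max (t - a 0) 0 ^ (m+1) * ((Nat.factorial (m+1) : ℝ))⁻¹ * (Q (e₁ i))⁻¹ := by
    intro i
    have hQe : (∏ j ∈ univ.erase (e₁ i), (A j - A (e₁ i))) = Q (e₁ i) := rfl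
    rw [hQe, hQprod i, ← hA'e, hfact]
    have h1 : ((m:ℝ) + 1) ≠ 0 := by positivity
    have h2 : (Nat.factorial m : ℝ) ≠ 0 := by
      exact_mod_cast Nat.cast_ne_zero.mpr (Nat.factorial_ne_zero m)
    field_simp
  rw [Finset.sum_congr rfl fun i _ => hterm2 i, Finset.sum_sub_distrib]
  have h₁ : ∑ i : Fin (m+1),
      max (t - a 0) 0 ^ (m+1) * ((Nat.factorial (m+1) : ℝ))⁻¹ * (Q (e₁ i))⁻¹
      = - (max (t - A 1) 0 ^ (m+1)
          / ((Nat.factorial (m+1) : ℝ) * ∏ j ∈ univ.erase 1, (A j - A 1))) := by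
    have hQ1 : (∏ j ∈ univ.erase (1 : Fin (m+2)), (A j - A 1)) = Q 1 := rfl
    rw [hQ1, hA1]
    rw [show (fun i => max (t - a 0) 0 ^ (m+1) * ((Nat.factorial (m+1) : ℝ))⁻¹ * (Q (e₁ i))⁻¹)
        = (fun i => (max (t - a 0) 0 ^ (m+1) * ((Nat.factorial (m+1) : ℝ))⁻¹) * (Q (e₁ i))⁻¹)
      from rfl]
    rw [← Finset.mul_sum, hsumQ, div_eq_mul_inv, mul_inv]
    ring
  rw [h₁]
  ring



lemma master : ∀ (m : ℕ), 1 ≤ m → ∀ (a : Fin m → ℝ) (A : Fin (m+1) → ℝ), A = Fin.cons 0 a →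
    (∀ i j : Fin (m+1), i ≠ j → A i ≠ A j) → ∀ t : ℝ,
    (volume (Ssec m a t)).toReal
      = ∑ i : Fin (m+1), max (t - A i) 0 ^ m /
          ((Nat.factorial m : ℝ) * ∏ j ∈ univ.erase i, (A j - A i)) := by
  intro m hm
  induction m, hm using Nat.le_induction with
  | base =>
    intro a A hA hdist t
    have ha : a 0 ≠ 0 := by
      have h := hdist 1 0 (by decide)
      rw [hA] at h
      exact h
    exact master_base a A hA ha t
  | succ n hn IHn =>
    intro a A hA hdist t
    exact master_step n hn a A hA hdist (fun a' A' hA' hdist' τ => IHn a' A' hA' hdist' τ) t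

/-- The volume function `t ↦ vol(Θ(a,t))` vanishes for `t` below all the `aᵢ`,
equals `1/n!` for `t` above all the `aᵢ`, and is a piecewise polynomial of
degree at most `n` between consecutive values of `a₀, …, aₙ`. -/
theorem volume_simplex_section_piecewise_polynomial (n : ℕ) (a : Fin n → ℝ)
    (ha : ∑ i, a i ^ 2 = 1)
    (A : Fin (n + 1) → ℝ) (hA : A = Fin.cons 0 a)
    (hdist : ∀ i j : Fin (n + 1), i ≠ j → A i ≠ A j)
    (f : ℝ → ℝ)
    (hf : ∀ t, f t = (volume {x : Fin n → ℝ |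
        ((∀ i, 0 ≤ x i) ∧ ∑ i, x i ≤ 1) ∧ ∑ i, a i * x i ≤ t}).toReal) :
    (∀ t : ℝ, (∀ i, t ≤ A i) → f t = 0) ∧
    (∀ t : ℝ, (∀ i, A i ≤ t) → f t = 1 / n.factorial) ∧
    (∀ i j : Fin (n + 1), A i < A j → (¬ ∃ k, A i < A k ∧ A k < A j) →
      ∃ p : Polynomial ℝ, p.natDegree ≤ n ∧
        ∀ t ∈ Set.Icc (A i) (A j), f t = p.eval t) := by
  classical
  have hn : 1 ≤ n := by
    by_contra h
    push_neg at h
    interval_cases n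
    simp at ha
  have hAinj : Function.Injective A := fun i j hij => by
    by_contra hne
    exact hdist i j hne hij
  have hfF : ∀ t, f t = ∑ i : Fin (n+1), max (t - A i) 0 ^ n /
      ((Nat.factorial n : ℝ) * ∏ j ∈ univ.erase i, (A j - A i)) := by
    intro t
    rw [hf t]
    exact master n hn a A hA hdist t
  refine ⟨?_, ?_, ?_⟩
  · -- below min
    intro t ht
    rw [hfF t]
    apply Finset.sum_eq_zero
    intro i _
    rw [max_eq_right (sub_nonpos.mpr (ht i)), zero_pow (by omega), zero_div]
  · -- above max
    intro t ht
    rw [hfF t]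
    have hlag := lag_sum_one (k := n+1) (by omega) A hAinj t
    simp only [Nat.add_sub_cancel] at hlag
    calc ∑ i : Fin (n+1), max (t - A i) 0 ^ n /
          ((Nat.factorial n : ℝ) * ∏ j ∈ univ.erase i, (A j - A i))
        = (Nat.factorial n : ℝ)⁻¹ * ∑ i : Fin (n+1), (t - A i) ^ n *
            (∏ j ∈ univ.erase i, (A j - A i))⁻¹ := by
          rw [Finset.mul_sum]
          refine Finset.sum_congr rfl fun i _ => ?_
          rw [max_eq_left (sub_nonneg.mpr (ht i)), div_eq_mul_inv, mul_inv]
          ring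
      _ = (Nat.factorial n : ℝ)⁻¹ := by rw [hlag, mul_one]
      _ = 1 / (Nat.factorial n : ℝ) := by rw [one_div]
  · -- piecewise polynomial
    intro i j hij hnone
    have horder : ∀ k, A k ≤ A i ∨ A j ≤ A k := by
      intro k
      by_contra h
      push_neg at h
      exact hnone ⟨k, h.1, h.2⟩
    set s : Finset (Fin (n+1)) := univ.filter (fun k => A k ≤ A i) with hs
    refine ⟨∑ k ∈ s, Polynomial.C (1/((Nat.factorial n : ℝ) *
        ∏ j' ∈ univ.erase k, (A j' - A k))) * (Polynomial.X - Polynomial.C (A k))^n, ?_, ?_⟩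
    · apply Polynomial.natDegree_sum_le_of_forall_le
      intro k _
      calc (Polynomial.C (1/((Nat.factorial n : ℝ) *
            ∏ j' ∈ univ.erase k, (A j' - A k))) * (Polynomial.X - Polynomial.C (A k))^n).natDegree
          ≤ _ + _ := Polynomial.natDegree_mul_le
        _ ≤ n := by
          rw [Polynomial.natDegree_C, Polynomial.natDegree_pow, Polynomial.natDegree_X_sub_C]
          omega
    · intro t ht
      obtain ⟨hti, htj⟩ := ht
      rw [hfF t]
      rw [Polynomial.eval_finset_sum]
      rw [← Finset.sum_subset (Finset.subset_univ s) ?zero]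
      case zero =>
        intro k _ hk
        rw [hs, Finset.mem_filter] at hk
        push_neg at hk
        have hAk : A j ≤ A k := (horder k).resolve_left (not_le.mpr (hk (mem_univ k)))
        rw [max_eq_right (by linarith : t - A k ≤ 0), zero_pow (by omega), zero_div]
      refine Finset.sum_congr rfl fun k hk => ?_
      rw [hs, Finset.mem_filter] at hk
      have hAk : A k ≤ A i := hk.2
      rw [max_eq_left (by linarith : 0 ≤ t - A k)]
      simp only [Polynomial.eval_mul, Polynomial.eval_C, Polynomial.eval_pow,
        Polynomial.eval_sub, Polynomial.eval_X]
      rw [div_eq_mul_inv, one_div, mul_comm]
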